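/- Let a, τ, r be integers with 1 < a ≤ τ, 1 ≤ r < τ and τ + 1 > a(r+1). Then every (a, a(r+1)−1, r) LRSC is also an (a, τ, r) LRSC. Consequently, there exists an (a, τ, r) LRSC of rate r/(r+1), which equals min{(τ+1−a)/(τ+1), r/(r+1)} and is therefore rate-optimal. -/

import Mathlib

/-- A packet-level code with a causal systematic encoder: the parity part of the
coded packet at time `t` is a fixed function of the message packets at times `≤ t`. -/
structure PacketCode (F : Type) (k n : ℕ) where
  parity : (ℤ → Fin k → F) → ℤ → Fin (n - k) → F
  causal : ∀ (m m' : ℤ → Fin k → F) (t : ℤ),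
    (∀ t' ≤ t, m t' = m' t') → parity m t = parity m' t

/-- A valid message stream vanishes at negative times. -/
def IsMsgStream {F : Type} [Zero F] {k : ℕ} (m : ℤ → Fin k → F) : Prop :=
  ∀ t < 0, m t = 0

/-- `(a, τ)` streaming-code property. -/
def IsSC {F : Type} [Zero F] {k n : ℕ} (C : PacketCode F k n) (a τ : ℕ) : Prop :=
  ∀ m m' : ℤ → Fin k → F, IsMsgStream m → IsMsgStream m' →
    ∀ t : ℤ, 0 ≤ t →
      ∀ E : Finset ℤ, (∀ x ∈ E, t ≤ x ∧ x ≤ t + τ) → t ∈ E → E.card ≤ a →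
        (∀ t' < t, m t' = m' t') →
        (∀ t' : ℤ, t ≤ t' → t' ≤ t + τ → t' ∉ E →
          m t' = m' t' ∧ C.parity m t' = C.parity m' t') →
        m t = m' t

/-- `(a, τ, r)` locally recoverable streaming code. -/
def IsLRSC {F : Type} [Zero F] {k n : ℕ} (C : PacketCode F k n) (a τ r : ℕ) : Prop :=
  IsSC C a τ ∧ IsSC C 1 r

open Finset

lemma geom_aux (a : ℕ) (ha : 1 ≤ a) : ∀ B : ℕ, (a - 1) * (∑ x ∈ range B, a ^ x) + 1 = a ^ B := by
  intro B
  induction B with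
  | zero => simp
  | succ B ih =>
    rw [sum_range_succ, Nat.mul_add, pow_succ]
    have h1 : (a - 1) * a ^ B + a ^ B = a * a ^ B := by
      rw [Nat.sub_one_mul]
      have h2 : a ^ B ≤ a * a ^ B := Nat.le_mul_of_pos_left _ (by omega)
      omega
    have h3 : a ^ B * a = a * a ^ B := Nat.mul_comm _ _
    omega

lemma sum_lt_pow {ι : Type*} (a B : ℕ) (ha : 2 ≤ a) (s : Finset ι) (ν g : ι → ℕ)
    (hinj : Set.InjOn ν s) (hB : ∀ c ∈ s, ν c < B) (hg : ∀ c ∈ s, g c < a) :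
    ∑ c ∈ s, a ^ ν c * g c < a ^ B := by
  have h1 : ∑ c ∈ s, a ^ ν c * g c ≤ ∑ c ∈ s, a ^ ν c * (a - 1) := by
    apply sum_le_sum
    intro c hc
    exact Nat.mul_le_mul_left _ (by have := hg c hc; omega)
  have h2 : ∑ c ∈ s, a ^ ν c * (a - 1) = (a - 1) * ∑ c ∈ s, a ^ ν c := by
    rw [mul_sum]; apply sum_congr rfl; intro c _; ring
  have h3 : ∑ c ∈ s, a ^ ν c = ∑ x ∈ s.image ν, a ^ x := by
    rw [sum_image (fun x hx y hy h => hinj hx hy h)]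
  have h4 : ∑ x ∈ s.image ν, a ^ x ≤ ∑ x ∈ range B, a ^ x := by
    apply sum_le_sum_of_subset
    intro x hx
    simp only [mem_image] at hx
    obtain ⟨c, hc, rfl⟩ := hx
    exact mem_range.mpr (hB c hc)
  have h5 := geom_aux a (by omega) B
  calc ∑ c ∈ s, a ^ ν c * g c ≤ (a - 1) * ∑ x ∈ s.image ν, a ^ x := by rw [← h3]; omega
    _ ≤ (a - 1) * ∑ x ∈ range B, a ^ x := Nat.mul_le_mul_left _ h4
    _ < a ^ B := by omega

lemma digits_unique {ι : Type*} [DecidableEq ι] (a : ℕ) (ha : 2 ≤ a) :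
    ∀ (s : Finset ι) (ν g h : ι → ℕ), Set.InjOn ν s → (∀ c ∈ s, g c < a) → (∀ c ∈ s, h c < a) →
    (∑ c ∈ s, a ^ ν c * g c = ∑ c ∈ s, a ^ ν c * h c) → ∀ c ∈ s, g c = h c := by
  intro s
  induction s using Finset.strongInductionOn with
  | _ s ih =>
    intro ν g h hinj hg hh hsum c hc
    obtain ⟨c₀, hc₀, hmax⟩ := s.exists_max_image ν ⟨c, hc⟩
    have hsplit : ∀ f : ι → ℕ, a ^ ν c₀ * f c₀ + ∑ x ∈ s.erase c₀, a ^ ν x * f x = ∑ x ∈ s, a ^ ν x * f x :=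
      fun f => Finset.add_sum_erase s (fun x => a ^ ν x * f x) hc₀
    have hlt : ∀ x ∈ s.erase c₀, ν x < ν c₀ := by
      intro x hx
      have hxs := Finset.mem_of_mem_erase hx
      have hne := Finset.ne_of_mem_erase hx
      have := hmax x hxs
      rcases lt_or_eq_of_le this with h' | h'
      · exact h'
      · exact absurd (hinj hxs hc₀ h') hne
    have hG : ∑ x ∈ s.erase c₀, a ^ ν x * g x < a ^ ν c₀ :=
      sum_lt_pow a _ ha _ _ _ (hinj.mono (fun x hx => Finset.mem_of_mem_erase hx)) hlt
        (fun x hx => hg x (Finset.mem_of_mem_erase hx))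
    have hH : ∑ x ∈ s.erase c₀, a ^ ν x * h x < a ^ ν c₀ :=
      sum_lt_pow a _ ha _ _ _ (hinj.mono (fun x hx => Finset.mem_of_mem_erase hx)) hlt
        (fun x hx => hh x (Finset.mem_of_mem_erase hx))
    have heq : a ^ ν c₀ * g c₀ + ∑ x ∈ s.erase c₀, a ^ ν x * g x
        = a ^ ν c₀ * h c₀ + ∑ x ∈ s.erase c₀, a ^ ν x * h x := by
      rw [hsplit g, hsplit h]; exact hsum
    have hgh : g c₀ = h c₀ := by
      by_contra hne
      rcases Nat.lt_or_ge (g c₀) (h c₀) with hl | hl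
      · have : a ^ ν c₀ * g c₀ + a ^ ν c₀ ≤ a ^ ν c₀ * h c₀ := by
          calc a ^ ν c₀ * g c₀ + a ^ ν c₀ = a ^ ν c₀ * (g c₀ + 1) := by ring
            _ ≤ a ^ ν c₀ * h c₀ := Nat.mul_le_mul_left _ (by omega)
        omega
      · have hl' : h c₀ < g c₀ := by omega
        have : a ^ ν c₀ * h c₀ + a ^ ν c₀ ≤ a ^ ν c₀ * g c₀ := by
          calc a ^ ν c₀ * h c₀ + a ^ ν c₀ = a ^ ν c₀ * (h c₀ + 1) := by ring
            _ ≤ a ^ ν c₀ * g c₀ := Nat.mul_le_mul_left _ (by omega)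
        omega
    rcases eq_or_ne c c₀ with rfl | hcc
    · exact hgh
    · have hrest : ∑ x ∈ s.erase c₀, a ^ ν x * g x = ∑ x ∈ s.erase c₀, a ^ ν x * h x := by
        rw [hgh] at heq; omega
      exact ih (s.erase c₀) (Finset.erase_ssubset hc₀) ν g h
        (hinj.mono (fun x hx => Finset.mem_of_mem_erase hx))
        (fun x hx => hg x (Finset.mem_of_mem_erase hx))
        (fun x hx => hh x (Finset.mem_of_mem_erase hx))
        hrest c (Finset.mem_erase.mpr ⟨hcc, hc⟩)

lemma signed_pow_two_ne_zero {α : Type*} [DecidableEq α] (S : Finset α) (hS : S.Nonempty)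
    (ε : α → ℤ) (hε : ∀ x ∈ S, ε x = 1 ∨ ε x = -1) (D : α → ℕ) (hD : Set.InjOn D S) :
    ∑ x ∈ S, ε x * 2 ^ D x ≠ 0 := by
  obtain ⟨x₀, hx₀, hmin⟩ := S.exists_min_image D hS
  intro h0
  rw [← Finset.add_sum_erase _ _ hx₀] at h0
  have hdvd : (2 : ℤ) ^ (D x₀ + 1) ∣ ∑ x ∈ S.erase x₀, ε x * 2 ^ D x := by
    apply Finset.dvd_sum
    intro x hx
    have hxs := Finset.mem_of_mem_erase hx
    have hne := Finset.ne_of_mem_erase hx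
    have h1 : D x₀ + 1 ≤ D x := by
      have := hmin x hxs
      rcases lt_or_eq_of_le this with h' | h'
      · omega
      · exact absurd (hD hx₀ hxs h') (Ne.symm hne)
    exact Dvd.dvd.mul_left (pow_dvd_pow 2 h1) _
  have h2 : ε x₀ * 2 ^ D x₀ = -(∑ x ∈ S.erase x₀, ε x * 2 ^ D x) := by linarith
  have hdvd2 : (2 : ℤ) ^ (D x₀ + 1) ∣ ε x₀ * 2 ^ D x₀ := by
    rw [h2]; exact hdvd.neg_right
  have h3 : (2 : ℤ) ^ (D x₀ + 1) = 2 ^ D x₀ * 2 := by ring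
  rcases hε x₀ hx₀ with h | h <;> rw [h] at hdvd2
  · simp only [one_mul] at hdvd2
    have := Int.le_of_dvd (by positivity) hdvd2
    have h4 : (2:ℤ) ^ D x₀ < 2 ^ (D x₀ + 1) := by
      apply pow_lt_pow_right₀ (by norm_num) (by omega)
    omega
  · have hdvd3 : (2 : ℤ) ^ (D x₀ + 1) ∣ 2 ^ D x₀ := (dvd_neg.mp (by simpa using hdvd2))
    have := Int.le_of_dvd (by positivity) hdvd3
    have h4 : (2:ℤ) ^ D x₀ < 2 ^ (D x₀ + 1) := by
      apply pow_lt_pow_right₀ (by norm_num) (by omega)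
    omega

lemma core_kernel (a N p : ℕ) (ha : 2 ≤ a) (hp : p.Prime)
    (hpB : a.factorial * 2 ^ a ^ (N + 1) < p)
    (Cs : Finset ℤ) (R : Finset ℕ) (q : ℤ → ℕ) (νf : ℤ → ℕ) (z : ℤ → ZMod p)
    (hR : ∀ i ∈ R, i < a)
    (hν : ∀ e ∈ Cs, νf e < N) (hνinj : Set.InjOn νf Cs)
    (hcount0 : Cs.card ≤ R.card)
    (hcount : ∀ x : ℕ, 1 ≤ x → (∃ e ∈ Cs, x ≤ q e) →
      (Cs.filter (fun e => x ≤ q e)).card < (R.filter (fun i => x ≤ i)).card)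
    (hrow : ∀ i ∈ R, ∑ e ∈ Cs.filter (fun e => q e ≤ i), (2 : ZMod p) ^ (a ^ νf e * (i - q e)) * z e = 0) :
    ∀ e ∈ Cs, z e = 0 := by
  classical
  intro e₀ he₀
  -- Hall's theorem
  set ι := {x : ℤ // x ∈ Cs}
  have hcardι : Fintype.card ι = Cs.card := Fintype.card_coe Cs
  have hall : ∀ (s : Finset ι), s.card ≤ (s.biUnion (fun c => R.filter (fun i => q c.1 ≤ i))).card := by
    intro s
    rcases s.eq_empty_or_nonempty with rfl | hs
    · simp
    obtain ⟨c₀, hc₀s, hmin⟩ := s.exists_min_image (fun c => q c.1) hs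
    have hsub : R.filter (fun i => q c₀.1 ≤ i) ⊆ s.biUnion (fun c => R.filter (fun i => q c.1 ≤ i)) :=
      Finset.subset_biUnion_of_mem (fun c => R.filter (fun i => q c.1 ≤ i)) hc₀s
    rcases Nat.eq_zero_or_pos (q c₀.1) with h0 | h1
    · have hfR : R.filter (fun i => q c₀.1 ≤ i) = R := by
        apply filter_true_of_mem; intro i _; omega
      have h2 : s.card ≤ Cs.card := by
        have := Finset.card_le_univ s
        simpa [hcardι] using this
      calc s.card ≤ R.card := le_trans h2 hcount0
        _ = (R.filter (fun i => q c₀.1 ≤ i)).card := by rw [hfR]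
        _ ≤ _ := card_le_card hsub
    · have hlt := hcount (q c₀.1) h1 ⟨c₀.1, c₀.2, le_refl _⟩
      have h2 : s.card ≤ (Cs.filter (fun e => q c₀.1 ≤ q e)).card := by
        apply Finset.card_le_card_of_injOn (fun c => c.1)
        · intro c hc
          exact mem_filter.mpr ⟨c.2, hmin c hc⟩
        · intro x _ y _ h
          exact Subtype.ext h
      have := card_le_card hsub
      omega
  obtain ⟨f, hfinj, hf⟩ := (Finset.all_card_le_biUnion_card_iff_exists_injective _).mp hall
  have hfR : ∀ c : ι, f c ∈ R := fun c => (mem_filter.mp (hf c)).1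
  have hfq : ∀ c : ι, q c.1 ≤ f c := fun c => (mem_filter.mp (hf c)).2
  have hfa : ∀ c : ι, f c < a := fun c => hR _ (hfR c)
  -- the square matrix over ℤ
  set M₀ : Matrix ι ι ℤ := fun rr c => if q c.1 ≤ f rr then 2 ^ (a ^ νf c.1 * (f rr - q c.1)) else 0 with hM₀
  set D : Equiv.Perm ι → ℕ := fun σ => ∑ c : ι, a ^ νf c.1 * (f (σ c) - q c.1) with hD
  set V : Finset (Equiv.Perm ι) := univ.filter (fun σ : Equiv.Perm ι => ∀ c, q c.1 ≤ f (σ c)) with hV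
  have hprod : ∀ σ ∈ V, ∏ c : ι, M₀ (σ c) c = 2 ^ D σ := by
    intro σ hσ
    have hσ' := (mem_filter.mp hσ).2
    rw [hD]
    rw [← Finset.prod_pow_eq_pow_sum]
    apply prod_congr rfl
    intro c _
    rw [hM₀]
    simp only [if_pos (hσ' c)]
  have hprod0 : ∀ σ : Equiv.Perm ι, σ ∉ V → ∏ c : ι, M₀ (σ c) c = 0 := by
    intro σ hσ
    simp only [hV, mem_filter, mem_univ, true_and, not_forall] at hσ
    obtain ⟨c, hc⟩ := hσ
    apply prod_eq_zero (mem_univ c)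
    rw [hM₀]; simp only [if_neg hc]
  have hDinj : Set.InjOn D V := by
    intro σ hσ σ' hσ' hDeq
    have hq1 := (mem_filter.mp hσ).2
    have hq2 := (mem_filter.mp hσ').2
    have hT : ∑ c : ι, a ^ νf c.1 * f (σ c) = ∑ c : ι, a ^ νf c.1 * f (σ' c) := by
      have e1 : ∀ (ρ : Equiv.Perm ι), (∀ c, q c.1 ≤ f (ρ c)) →
          ∑ c : ι, a ^ νf c.1 * f (ρ c)
            = (∑ c : ι, a ^ νf c.1 * (f (ρ c) - q c.1)) + ∑ c : ι, a ^ νf c.1 * q c.1 := by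
        intro ρ hρ
        rw [← Finset.sum_add_distrib]
        apply sum_congr rfl
        intro c _
        have := hρ c
        rw [← Nat.mul_add, Nat.sub_add_cancel this]
      rw [e1 σ hq1, e1 σ' hq2]
      simpa using congrArg (fun x => x + ∑ c : ι, a ^ νf c.1 * q c.1) hDeq
    have hdig := digits_unique a ha univ (fun c : ι => νf c.1) (fun c => f (σ c)) (fun c => f (σ' c))
      (by intro x _ y _ h
          exact Subtype.ext (hνinj x.2 y.2 h))
      (fun c _ => hfa _) (fun c _ => hfa _) hT
    apply Equiv.ext
    intro c
    exact hfinj (hdig c (mem_univ c))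
  have hVne : (1 : Equiv.Perm ι) ∈ V := by
    simp only [hV, mem_filter, mem_univ, true_and]
    intro c; simpa using hfq c
  have hdet_eq : M₀.det = ∑ σ ∈ V, ((Equiv.Perm.sign σ : ℤ)) * 2 ^ D σ := by
    rw [Matrix.det_apply]
    rw [← Finset.sum_filter_add_sum_filter_not univ (fun σ => σ ∈ V)]
    have hz : ∑ σ ∈ univ.filter (fun σ => σ ∉ V), Equiv.Perm.sign σ • ∏ i : ι, M₀ (σ i) i = 0 := by
      apply sum_eq_zero
      intro σ hσ
      rw [hprod0 σ (mem_filter.mp hσ).2]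
      simp
    rw [hz, add_zero]
    have hfil : univ.filter (fun σ : Equiv.Perm ι => σ ∈ V) = V := by
      apply Finset.ext; intro σ; simp
    rw [hfil]
    apply sum_congr rfl
    intro σ hσ
    rw [hprod σ hσ]
    simp [Units.smul_def, zsmul_eq_mul]
  have hdet_ne : M₀.det ≠ 0 := by
    rw [hdet_eq]
    apply signed_pow_two_ne_zero V ⟨1, hVne⟩ _ _ D hDinj
    intro σ _
    rcases Int.units_eq_one_or (Equiv.Perm.sign σ) with h | h <;> rw [h] <;> simp
  -- bound on the determinant
  have hDb : ∀ σ ∈ V, D σ ≤ a ^ (N + 1) := by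
    intro σ _
    rw [hD]
    have hcard_le : Cs.card ≤ a := by
      by_contra hgt
      push_neg at hgt
      have := hcount0
      have hRsub : R ⊆ range a := fun i hi => mem_range.mpr (hR i hi)
      have := card_le_card hRsub
      simp only [card_range] at this
      omega
    calc ∑ c : ι, a ^ νf c.1 * (f (σ c) - q c.1) ≤ ∑ _c : ι, a ^ N := by
          apply sum_le_sum
          intro c _
          have hN1 : 1 ≤ N := by have := hν c.1 c.2; omega
          have h1 : a ^ νf c.1 ≤ a ^ (N - 1) := by
            apply Nat.pow_le_pow_right (by omega)
            have := hν c.1 c.2; omega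
          have h2 : f (σ c) - q c.1 ≤ a - 1 := by have := hfa (σ c); omega
          calc a ^ νf c.1 * (f (σ c) - q c.1) ≤ a ^ (N - 1) * (a - 1) := Nat.mul_le_mul h1 h2
            _ ≤ a ^ (N - 1) * a := Nat.mul_le_mul_left _ (by omega)
            _ = a ^ (N - 1 + 1) := by rw [pow_succ]
            _ ≤ a ^ N := Nat.pow_le_pow_right (by omega) (by omega)
        _ = Fintype.card ι * a ^ N := by rw [sum_const, smul_eq_mul, Finset.card_univ]
        _ ≤ a * a ^ N := Nat.mul_le_mul_right _ (by rw [hcardι]; exact hcard_le)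
        _ = a ^ (N + 1) := by rw [pow_succ, Nat.mul_comm]
  have hVf : V.card ≤ a.factorial := by
    have h3 : V.card ≤ Fintype.card (Equiv.Perm ι) := card_le_univ V
    rw [Fintype.card_perm] at h3
    have hcard_le : Cs.card ≤ a := by
      have hRsub : R ⊆ range a := fun i hi => mem_range.mpr (hR i hi)
      have := card_le_card hRsub
      simp only [card_range] at this
      omega
    calc V.card ≤ (Fintype.card ι).factorial := h3
      _ ≤ a.factorial := Nat.factorial_le (by rw [hcardι]; exact hcard_le)
  have habs : |M₀.det| ≤ ((a.factorial * 2 ^ a ^ (N + 1) : ℕ) : ℤ) := by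
    rw [hdet_eq]
    calc |∑ σ ∈ V, ((Equiv.Perm.sign σ : ℤ)) * 2 ^ D σ|
        ≤ ∑ σ ∈ V, |((Equiv.Perm.sign σ : ℤ)) * 2 ^ D σ| := Finset.abs_sum_le_sum_abs _ _
      _ ≤ ∑ _σ ∈ V, ((2:ℤ) ^ a ^ (N + 1)) := by
          apply sum_le_sum
          intro σ hσ
          rw [abs_mul]
          have h1 : |((Equiv.Perm.sign σ : ℤ))| = 1 := by
            rcases Int.units_eq_one_or (Equiv.Perm.sign σ) with h | h <;> rw [h] <;> simp
          rw [h1, one_mul, abs_pow, abs_two]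
          exact pow_le_pow_right₀ (by norm_num) (hDb σ hσ)
      _ = (V.card : ℤ) * 2 ^ a ^ (N + 1) := by rw [sum_const]; simp [nsmul_eq_mul]
      _ ≤ ((a.factorial : ℤ)) * 2 ^ a ^ (N + 1) := by
          exact mul_le_mul_of_nonneg_right (by exact_mod_cast hVf) (by positivity)
      _ = _ := by push_cast; ring
  -- transfer to ZMod p
  set M : Matrix ι ι (ZMod p) := M₀.map (Int.cast : ℤ → ZMod p) with hM
  haveI : Fact p.Prime := ⟨hp⟩
  have hdetF : M.det ≠ 0 := by
    have hcast : M.det = ((M₀.det : ℤ) : ZMod p) := by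
      have h := (RingHom.map_det (Int.castRingHom (ZMod p)) M₀).symm
      rw [RingHom.mapMatrix_apply] at h
      simpa [hM, Int.coe_castRingHom] using h
    rw [hcast]
    intro h
    rw [ZMod.intCast_zmod_eq_zero_iff_dvd] at h
    have h1 : (p : ℤ) ≤ |M₀.det| := Int.le_of_dvd (abs_pos.mpr hdet_ne) ((dvd_abs _ _).mpr h)
    have h2 : ((a.factorial * 2 ^ a ^ (N + 1) : ℕ) : ℤ) < (p:ℤ) := by exact_mod_cast hpB
    omega
  -- kernel argument
  set v : ι → ZMod p := fun c => z c.1 with hv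
  have hmv : M.mulVec v = 0 := by
    funext rr
    have hr := hrow (f rr) (hfR rr)
    simp only [Matrix.mulVec, dotProduct, Pi.zero_apply]
    have step1 : ∑ c : ι, M rr c * v c
        = ∑ e ∈ Cs, (if q e ≤ f rr then (2 : ZMod p) ^ (a ^ νf e * (f rr - q e)) * z e else 0) := by
      rw [← Finset.sum_coe_sort Cs (fun e => (if q e ≤ f rr then (2 : ZMod p) ^ (a ^ νf e * (f rr - q e)) * z e else 0))]
      apply sum_congr rfl
      intro c _
      rw [hM, hv, hM₀]
      show ((if q c.1 ≤ f rr then (2:ℤ) ^ (a ^ νf c.1 * (f rr - q c.1)) else 0 : ℤ) : ZMod p) * z c.1 = _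
      split_ifs with h
      · push_cast; ring
      · simp
    show ∑ c : ι, M rr c * v c = 0
    rw [step1, ← Finset.sum_filter]
    exact hr
  have hvz : v = 0 := by
    have hU : IsUnit M.det := isUnit_iff_ne_zero.mpr hdetF
    have h1 : M⁻¹.mulVec (M.mulVec v) = M⁻¹.mulVec 0 := by rw [hmv]
    rw [Matrix.mulVec_mulVec, Matrix.nonsing_inv_mul M hU, Matrix.one_mulVec, Matrix.mulVec_zero] at h1
    exact h1
  exact congrFun hvz ⟨e₀, he₀⟩

-- monotonicity of IsSC in τ
lemma IsSC_mono {F : Type} [Zero F] {k n : ℕ} (C : PacketCode F k n) (a τ' τ : ℕ)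
    (h : τ' ≤ τ) (hSC : IsSC C a τ') : IsSC C a τ := by
  intro m m' hm hm' t ht E hEw htE hcard hpast hwin
  classical
  apply hSC m m' hm hm' t ht (E.filter (fun x => x ≤ t + (τ' : ℤ)))
  · intro x hx
    rw [mem_filter] at hx
    exact ⟨(hEw x hx.1).1, hx.2⟩
  · rw [mem_filter]
    exact ⟨htE, by omega⟩
  · exact le_trans (card_le_card (filter_subset _ _)) hcard
  · exact hpast
  · intro t' h1 h2 h3
    refine hwin t' h1 ?_ ?_
    · have : (τ' : ℤ) ≤ τ := by exact_mod_cast h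
      omega
    · intro hmem
      exact h3 (mem_filter.mpr ⟨hmem, h2⟩)

noncomputable section

def nuf (τ : ℕ) (u : ℤ) : ℕ := (u % ((τ : ℤ) + 1)).toNat

def cf (a τ p : ℕ) (u : ℤ) (i : ℕ) : ZMod p := (2 : ZMod p) ^ (a ^ nuf τ u * i)

def lagf (r : ℕ) (pr : ℕ × Fin r) : ℕ := pr.1 * (r + 1) + (pr.2 : ℕ) + 1

def theCode (a τ r p : ℕ) : PacketCode (ZMod p) r (r + 1) where
  parity := fun m s _ => ∑ pr ∈ range a ×ˢ (univ : Finset (Fin r)),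
      cf a τ p (s - (lagf r pr : ℤ)) pr.1 * m (s - (lagf r pr : ℤ)) pr.2
  causal := by
    intro m m' t h
    funext x
    apply Finset.sum_congr rfl
    intro pr _
    rw [h (t - (lagf r pr : ℤ)) (by
      have : (0:ℤ) ≤ (lagf r pr : ℤ) := by positivity
      omega)]

lemma parity_diff (a τ r p : ℕ) (m m' : ℤ → Fin r → ZMod p) (s : ℤ)
    (h : (theCode a τ r p).parity m s = (theCode a τ r p).parity m' s) :
    ∑ pr ∈ range a ×ˢ (univ : Finset (Fin r)),
      cf a τ p (s - (lagf r pr : ℤ)) pr.1 *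
        (m (s - (lagf r pr : ℤ)) pr.2 - m' (s - (lagf r pr : ℤ)) pr.2) = 0 := by
  have h0 := congrFun h ⟨0, by omega⟩
  simp only [theCode] at h0
  have : ∑ pr ∈ range a ×ˢ (univ : Finset (Fin r)),
      cf a τ p (s - (lagf r pr : ℤ)) pr.1 *
        (m (s - (lagf r pr : ℤ)) pr.2 - m' (s - (lagf r pr : ℤ)) pr.2)
      = (∑ pr ∈ range a ×ˢ (univ : Finset (Fin r)),
          cf a τ p (s - (lagf r pr : ℤ)) pr.1 * m (s - (lagf r pr : ℤ)) pr.2)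
        - ∑ pr ∈ range a ×ˢ (univ : Finset (Fin r)),
          cf a τ p (s - (lagf r pr : ℤ)) pr.1 * m' (s - (lagf r pr : ℤ)) pr.2 := by
    rw [← Finset.sum_sub_distrib]
    apply sum_congr rfl
    intro pr _
    ring
  rw [this, h0, sub_self]

lemma local_SC (a τ r p : ℕ) (hr : 1 ≤ r) (ha : 1 ≤ a) :
    IsSC (theCode a τ r p) 1 r := by
  intro m m' hm hm' t ht E hEw htE hcard hpast hwin
  classical
  have hEt : ∀ x ∈ E, x = t := fun x hx => Finset.card_le_one.mp hcard x hx t htE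
  funext jf
  set s : ℤ := t + ((jf : ℕ) + 1 : ℕ) with hs
  have hjr : (jf : ℕ) < r := jf.isLt
  have hs1 : t ≤ s := by rw [hs]; push_cast; omega
  have hs2 : s ≤ t + r := by rw [hs]; push_cast; omega
  have hs3 : s ∉ E := by
    intro h
    have := hEt s h
    rw [hs] at this; push_cast at this; omega
  have hrow := parity_diff a τ r p m m' s (hwin s hs1 hs2 hs3).2
  have hmem : ((0 : ℕ), jf) ∈ range a ×ˢ (univ : Finset (Fin r)) :=
    mem_product.mpr ⟨mem_range.mpr (by omega), mem_univ _⟩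
  rw [Finset.sum_eq_single_of_mem ((0 : ℕ), jf) hmem] at hrow
  · have hlag : (lagf r ((0:ℕ), jf) : ℤ) = (jf : ℕ) + 1 := by
      simp [lagf]
    have hst : s - (lagf r ((0:ℕ), jf) : ℤ) = t := by rw [hlag, hs]; push_cast; ring
    rw [hst] at hrow
    have hcf : cf a τ p t 0 = 1 := by simp [cf]
    rw [hcf, one_mul] at hrow
    exact sub_eq_zero.mp hrow
  · intro pr hpr hne
    have hi : pr.1 < a := mem_range.mp (mem_product.mp hpr).1
    have hj' : (pr.2 : ℕ) < r := pr.2.isLt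
    set u : ℤ := s - (lagf r pr : ℤ) with hu
    have hu_eq : u = t + ((jf : ℕ) : ℤ) - (pr.2 : ℕ) - (pr.1 : ℕ) * ((r:ℤ) + 1) := by
      rw [hu, hs, lagf]; push_cast; ring
    have hd0 : m u pr.2 - m' u pr.2 = 0 → cf a τ p u pr.1 * (m u pr.2 - m' u pr.2) = 0 := by
      intro h; rw [h, mul_zero]
    rcases lt_trichotomy u t with hlt | heq | hgt
    · apply hd0; rw [hpast u hlt, sub_self]
    · -- u = t forces pr = (0, jf): contradiction
      exfalso
      have h1 : ((jf:ℕ) : ℤ) - (pr.2 : ℕ) = (pr.1 : ℕ) * ((r:ℤ) + 1) := by omega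
      have h2 : pr.1 = 0 := by
        by_contra h3
        have h4 : (1 : ℤ) ≤ (pr.1 : ℕ) := by
          have : 1 ≤ pr.1 := by omega
          exact_mod_cast this
        have h5 : (1:ℤ) * ((r:ℤ)+1) ≤ ((pr.1 : ℕ) : ℤ) * ((r:ℤ) + 1) :=
          mul_le_mul_of_nonneg_right h4 (by positivity)
        rw [one_mul] at h5
        omega
      rw [h2] at h1
      simp only [Nat.cast_zero, zero_mul] at h1
      have h6 : (jf : ℕ) = (pr.2 : ℕ) := by omega
      apply hne
      have : pr.2 = jf := Fin.ext h6.symm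
      rw [Prod.ext_iff]
      exact ⟨h2, this⟩
    · -- t < u : unerased in window
      apply hd0
      have hmul : (0:ℤ) ≤ ((pr.1 : ℕ) : ℤ) * ((r:ℤ) + 1) := by positivity
      have hub : u ≤ t + r := by omega
      have hnE : u ∉ E := by
        intro h
        have := hEt u h
        omega
      rw [(hwin u (le_of_lt hgt) hub hnE).1, sub_self]

lemma global_SC (a τ r p : ℕ) (ha : 2 ≤ a) (hr : 1 ≤ r) (hτ : a * (r + 1) ≤ τ)
    (hp : p.Prime) (hpB : a.factorial * 2 ^ a ^ ((τ + 1) + 1) < p) :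
    IsSC (theCode a τ r p) a τ := by
  intro m m' hm hm' t ht E hEw htE hcard hpast hwin
  classical
  set d : ℤ → Fin r → ZMod p := fun u c => m u c - m' u c with hd
  have hd0 : ∀ u : ℤ, (u < t ∨ (t ≤ u ∧ u ≤ t + τ ∧ u ∉ E)) → ∀ c, d u c = 0 := by
    intro u hu c
    rcases hu with h | ⟨h1, h2, h3⟩
    · show m u c - m' u c = 0
      rw [hpast u h, sub_self]
    · show m u c - m' u c = 0
      rw [(hwin u h1 h2 h3).1, sub_self]
  funext jf
  set j : ℕ := (jf : ℕ) + 1 with hj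
  have hj1 : 1 ≤ j := by omega
  have hjr : j ≤ r := by have := jf.isLt; omega
  have hjrz : (j : ℤ) ≤ (r : ℤ) := by exact_mod_cast hjr
  have hj1z : (1 : ℤ) ≤ (j : ℤ) := by exact_mod_cast hj1
  have hrpos : (0:ℤ) < (r:ℤ) + 1 := by positivity
  set jE : ℤ → ℕ := fun e => (((j:ℤ) - (e - t)) % ((r:ℤ)+1)).toNat with hjE
  set qE : ℤ → ℤ := fun e => -(((j:ℤ) - (e - t)) / ((r:ℤ)+1)) with hqE
  set qN : ℤ → ℕ := fun e => (qE e).toNat with hqN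
  have hjEcast : ∀ e : ℤ, ((jE e : ℕ) : ℤ) = ((j:ℤ) - (e - t)) % ((r:ℤ)+1) := by
    intro e
    rw [hjE]
    exact Int.toNat_of_nonneg (Int.emod_nonneg _ (by omega))
  have hjEb : ∀ e : ℤ, (0:ℤ) ≤ ((jE e : ℕ) : ℤ) ∧ ((jE e : ℕ) : ℤ) < (r:ℤ) + 1 := by
    intro e
    constructor
    · exact Int.natCast_nonneg _
    · rw [hjEcast e]
      exact Int.emod_lt_of_pos _ hrpos
  have hdec : ∀ e : ℤ, (e - t) = (j:ℤ) - ((jE e : ℕ) : ℤ) + qE e * ((r:ℤ)+1) := by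
    intro e
    have h1 := Int.mul_ediv_add_emod ((j:ℤ) - (e - t)) ((r:ℤ)+1)
    rw [hjEcast e, hqE]
    linear_combination h1
  have hqpos : ∀ e : ℤ, t ≤ e → 0 ≤ qE e := by
    intro e he
    by_contra hneg
    push_neg at hneg
    have h1 : qE e ≤ -1 := by omega
    have h2 : qE e * ((r:ℤ)+1) ≤ (-1) * ((r:ℤ)+1) :=
      mul_le_mul_of_nonneg_right h1 (by omega)
    have h3 := hdec e
    have h4 := (hjEb e).2
    have h5 := (hjEb e).1
    linarith
  have hqNcast : ∀ e : ℤ, t ≤ e → ((qN e : ℕ) : ℤ) = qE e := by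
    intro e he
    rw [hqN]
    exact Int.toNat_of_nonneg (hqpos e he)
  have huniq : ∀ (e : ℤ) (jj qq : ℤ), 1 ≤ jj → jj ≤ r →
      (e - t) = (j:ℤ) - jj + qq * ((r:ℤ)+1) → ((jE e : ℕ) : ℤ) = jj ∧ qE e = qq := by
    intro e jj qq h1 h2 h3
    have hde := hdec e
    have h4 := (hjEb e).2
    have h5 := (hjEb e).1
    have h6 : jj - ((jE e : ℕ) : ℤ) = (qq - qE e) * ((r:ℤ)+1) := by
      linear_combination h3 - hde
    have h7 : qE e = qq := by
      by_contra h8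
      rcases lt_or_gt_of_ne h8 with h9 | h9
      · have h10 : (1:ℤ) ≤ qq - qE e := by omega
        have h11 : (1:ℤ) * ((r:ℤ)+1) ≤ (qq - qE e) * ((r:ℤ)+1) :=
          mul_le_mul_of_nonneg_right h10 (by omega)
        linarith
      · have h10 : qq - qE e ≤ -1 := by omega
        have h11 : (qq - qE e) * ((r:ℤ)+1) ≤ (-1) * ((r:ℤ)+1) :=
          mul_le_mul_of_nonneg_right h10 (by omega)
        linarith
    constructor
    · rw [h7] at h6; linarith
    · exact h7
  have hjEt : ((jE t : ℕ) : ℤ) = (j:ℤ) ∧ qE t = 0 := by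
    apply huniq t (j:ℤ) 0 hj1z hjrz
    ring
  have hjEnat : ∀ e : ℤ, jE e < r + 1 := by
    intro e
    have := (hjEb e).2
    exact_mod_cast this
  set z : ℤ → ZMod p := fun e => d e ⟨jE e - 1, by have := hjEnat e; omega⟩ with hz
  set U : Finset ℤ := E.filter (fun e => jE e ≠ 0 ∧ qN e ≤ a - 1) with hU
  set I : Finset ℕ := (range a).filter (fun i => (t + (j:ℤ) + (i:ℤ) * ((r:ℤ)+1)) ∉ E) with hI
  set Mn : Finset ℕ := (range a).filter (fun i => (t + (j:ℤ) + (i:ℤ) * ((r:ℤ)+1)) ∈ E) with hMn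
  -- row equations
  have hrowlem : ∀ i : ℕ, i ∈ I →
      ∑ e ∈ U.filter (fun e => qN e ≤ i), (2 : ZMod p) ^ (a ^ nuf τ e * (i - qN e)) * z e = 0 := by
    intro i hiI
    rw [hI, mem_filter, mem_range] at hiI
    obtain ⟨hia, hsE⟩ := hiI
    set s : ℤ := t + (j:ℤ) + (i:ℤ) * ((r:ℤ)+1) with hs
    have hiaz : (i:ℤ) < (a:ℤ) := by exact_mod_cast hia
    have hipos : (0:ℤ) ≤ (i:ℤ) * ((r:ℤ)+1) := by positivity
    have hs1 : t ≤ s := by rw [hs]; omega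
    have hs2 : s ≤ t + τ := by
      have h1 : (i:ℤ) ≤ (a:ℤ) - 1 := by omega
      have h2 : (i:ℤ)*((r:ℤ)+1) ≤ ((a:ℤ)-1)*((r:ℤ)+1) :=
        mul_le_mul_of_nonneg_right h1 (by omega)
      have h3 : (a:ℤ)*((r:ℤ)+1) ≤ (τ:ℤ) := by exact_mod_cast hτ
      have h4 : ((a:ℤ)-1)*((r:ℤ)+1) = (a:ℤ)*((r:ℤ)+1) - ((r:ℤ)+1) := by ring
      rw [hs]
      linarith
    -- the map from unknowns to pairs, and the key identity
    have hkey : ∀ e ∈ U.filter (fun e => qN e ≤ i),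
        s - ((lagf r ((i - qN e : ℕ), (⟨jE e - 1, by have := hjEnat e; omega⟩ : Fin r)) : ℕ) : ℤ) = e := by
      intro e he
      rw [mem_filter] at he
      obtain ⟨heU, heq⟩ := he
      rw [hU, mem_filter] at heU
      obtain ⟨heE, hjne, hqa⟩ := heU
      have het : t ≤ e := (hEw e heE).1
      have hjE1 : 1 ≤ jE e := by omega
      have hlagc : ((lagf r ((i - qN e : ℕ), (⟨jE e - 1, by have := hjEnat e; omega⟩ : Fin r)) : ℕ) : ℤ)
          = ((i:ℤ) - ((qN e : ℕ) : ℤ)) * ((r:ℤ)+1) + ((jE e : ℕ) : ℤ) := by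
        simp only [lagf]
        push_cast [Nat.cast_sub heq, Nat.cast_sub hjE1]
        ring
      rw [hlagc, hs, hqNcast e het]
      have hdece := hdec e
      linear_combination -hdece
    have hrow0 := parity_diff a τ r p m m' s (hwin s hs1 hs2 hsE).2
    rw [← Finset.sum_filter_add_sum_filter_not (range a ×ˢ (univ : Finset (Fin r)))
      (fun pr => (s - (lagf r pr : ℤ)) ∈ E)] at hrow0
    have hzer : ∑ pr ∈ (range a ×ˢ (univ : Finset (Fin r))).filter
        (fun pr => ¬ (s - (lagf r pr : ℤ)) ∈ E),
        cf a τ p (s - (lagf r pr : ℤ)) pr.1 *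
          (m (s - (lagf r pr : ℤ)) pr.2 - m' (s - (lagf r pr : ℤ)) pr.2) = 0 := by
      apply sum_eq_zero
      intro pr hpr
      rw [mem_filter] at hpr
      have hnotE := hpr.2
      have hlag1 : (1:ℤ) ≤ (lagf r pr : ℤ) := by
        have : 1 ≤ lagf r pr := by simp [lagf]
        exact_mod_cast this
      have hdz : d (s - (lagf r pr : ℤ)) pr.2 = 0 := by
        apply hd0
        rcases lt_or_ge (s - (lagf r pr : ℤ)) t with hlt | hge
        · left; exact hlt
        · right
          exact ⟨hge, by omega, hnotE⟩
      show cf a τ p (s - (lagf r pr : ℤ)) pr.1 *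
          (m (s - (lagf r pr : ℤ)) pr.2 - m' (s - (lagf r pr : ℤ)) pr.2) = 0
      have : m (s - (lagf r pr : ℤ)) pr.2 - m' (s - (lagf r pr : ℤ)) pr.2 = 0 := hdz
      rw [this, mul_zero]
    rw [hzer, add_zero] at hrow0
    rw [← hrow0]
    apply Finset.sum_nbij'
      (i := fun e => ((i - qN e : ℕ), (⟨jE e - 1, by have := hjEnat e; omega⟩ : Fin r)))
      (j := fun pr => s - (lagf r pr : ℤ))
    · -- maps into target
      intro e he
      have hkeye := hkey e he
      rw [mem_filter] at he ⊢
      obtain ⟨heU, heq⟩ := he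
      rw [hU, mem_filter] at heU
      obtain ⟨heE, hjne, hqa⟩ := heU
      constructor
      · rw [mem_product]
        exact ⟨mem_range.mpr (by omega), mem_univ _⟩
      · rw [hkeye]
        exact heE
    · -- maps back into source
      intro pr hpr
      rw [mem_filter] at hpr
      obtain ⟨hpp, huE⟩ := hpr
      rw [mem_product, mem_range] at hpp
      have hi' : pr.1 < a := hpp.1
      have hut : t ≤ s - (lagf r pr : ℤ) := (hEw _ huE).1
      have hj2 : ((pr.2 : ℕ) : ℤ) < (r:ℤ) := by exact_mod_cast pr.2.isLt
      have hudec : (s - (lagf r pr : ℤ)) - t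
          = (j:ℤ) - (((pr.2:ℕ) : ℤ)+1) + ((i:ℤ) - ((pr.1:ℕ) : ℤ)) * ((r:ℤ)+1) := by
        rw [hs]; simp only [lagf]; push_cast; ring
      have huu := huniq (s - (lagf r pr : ℤ)) (((pr.2:ℕ) : ℤ)+1) ((i:ℤ) - ((pr.1:ℕ):ℤ))
        (by omega) (by omega) hudec
      have hq0 : (0:ℤ) ≤ (i:ℤ) - ((pr.1:ℕ):ℤ) := by
        rw [← huu.2]; exact hqpos _ hut
      have hqNu : ((qN (s - (lagf r pr : ℤ)) : ℕ) : ℤ) = (i:ℤ) - ((pr.1:ℕ):ℤ) := by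
        rw [hqNcast _ hut, huu.2]
      have hjEu := huu.1
      rw [mem_filter, hU, mem_filter]
      refine ⟨⟨huE, ?_, ?_⟩, ?_⟩
      · intro h0
        rw [h0] at hjEu
        simp at hjEu
        omega
      · omega
      · omega
    · -- left inverse
      intro e he
      exact hkey e he
    · -- right inverse
      intro pr hpr
      rw [mem_filter] at hpr
      obtain ⟨hpp, huE⟩ := hpr
      rw [mem_product, mem_range] at hpp
      have hi' : pr.1 < a := hpp.1
      have hut : t ≤ s - (lagf r pr : ℤ) := (hEw _ huE).1
      have hj2 : ((pr.2 : ℕ) : ℤ) < (r:ℤ) := by exact_mod_cast pr.2.isLt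
      have hudec : (s - (lagf r pr : ℤ)) - t
          = (j:ℤ) - (((pr.2:ℕ) : ℤ)+1) + ((i:ℤ) - ((pr.1:ℕ) : ℤ)) * ((r:ℤ)+1) := by
        rw [hs]; simp only [lagf]; push_cast; ring
      have huu := huniq (s - (lagf r pr : ℤ)) (((pr.2:ℕ) : ℤ)+1) ((i:ℤ) - ((pr.1:ℕ):ℤ))
        (by omega) (by omega) hudec
      have hqNu : ((qN (s - (lagf r pr : ℤ)) : ℕ) : ℤ) = (i:ℤ) - ((pr.1:ℕ):ℤ) := by
        rw [hqNcast _ hut, huu.2]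
      have hjEu := huu.1
      have h1 : i - qN (s - (lagf r pr : ℤ)) = pr.1 := by omega
      have h2 : jE (s - (lagf r pr : ℤ)) - 1 = (pr.2 : ℕ) := by omega
      rw [Prod.ext_iff]
      constructor
      · exact h1
      · apply Fin.ext
        exact h2
    · -- summand equality
      intro e he
      have hkeye := hkey e he
      show (2 : ZMod p) ^ (a ^ nuf τ e * (i - qN e)) * z e
        = cf a τ p (s - (lagf r _ : ℤ)) _ * (m (s - (lagf r _ : ℤ)) _ - m' (s - (lagf r _ : ℤ)) _)
      rw [hkeye]
      rfl
  -- counting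
  have hIMn : I.card + Mn.card = a := by
    have h := Finset.card_filter_add_card_filter_not
      (s := range a) (p := fun i : ℕ => (t + (j:ℤ) + (i:ℤ) * ((r:ℤ)+1)) ∈ E)
    rw [card_range] at h
    rw [hI, hMn]
    omega
  have hUMn : U.card + Mn.card ≤ a := by
    set Mim : Finset ℤ := Mn.image (fun i : ℕ => t + (j:ℤ) + (i:ℤ)*((r:ℤ)+1)) with hMim
    have hinj : Set.InjOn (fun i : ℕ => t + (j:ℤ) + (i:ℤ)*((r:ℤ)+1)) Mn := by
      intro x _ y _ hxy
      simp only at hxy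
      have h1 : (x:ℤ) * ((r:ℤ)+1) = (y:ℤ)*((r:ℤ)+1) := by linarith
      have h2 := mul_right_cancel₀ (by omega : ((r:ℤ)+1) ≠ 0) h1
      exact_mod_cast h2
    have hcardim : Mim.card = Mn.card := card_image_of_injOn hinj
    have hsubE : Mim ⊆ E := by
      intro x hx
      rw [hMim, mem_image] at hx
      obtain ⟨i, hi, rfl⟩ := hx
      rw [hMn, mem_filter] at hi
      exact hi.2
    have hdisj : Disjoint U Mim := by
      rw [Finset.disjoint_left]
      intro x hxU hxM
      rw [hMim, mem_image] at hxM
      obtain ⟨i, hi, hxe⟩ := hxM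
      have h1 : (j:ℤ) - (x - t) = (-(i:ℤ)) * ((r:ℤ)+1) := by rw [← hxe]; ring
      have h2 : ((j:ℤ) - (x - t)) % ((r:ℤ)+1) = 0 := by
        rw [h1]; exact Int.mul_emod_left _ _
      have h3 : jE x = 0 := by
        rw [hjE]; simp only; rw [h2]; rfl
      rw [hU, mem_filter] at hxU
      exact hxU.2.1 h3
    have h5 : (U ∪ Mim).card = U.card + Mim.card := card_union_of_disjoint hdisj
    have h6 : (U ∪ Mim) ⊆ E := by
      apply union_subset _ hsubE
      rw [hU]; exact filter_subset _ _
    have h7 := card_le_card h6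
    have h8 := card_union_le U Mim
    omega
  -- the minimal threshold
  have hPex : (U.filter (fun e => qN e ≤ a - 1)).card ≤ (I.filter (fun i' => i' ≤ a - 1)).card := by
    have h1 : U.filter (fun e => qN e ≤ a - 1) = U := by
      apply filter_true_of_mem
      intro e he
      rw [hU, mem_filter] at he
      exact he.2.2
    have h2 : I.filter (fun i' => i' ≤ a - 1) = I := by
      apply filter_true_of_mem
      intro i hi
      rw [hI, mem_filter, mem_range] at hi
      omega
    rw [h1, h2]
    omega
  have hex : ∃ θ : ℕ, (U.filter (fun e => qN e ≤ θ)).card ≤ (I.filter (fun i' => i' ≤ θ)).card :=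
    ⟨a-1, hPex⟩
  set θs := Nat.find hex with hθs
  have hPθ := Nat.find_spec hex
  have hPmin : ∀ x, x < θs →
      ¬ ((U.filter (fun e => qN e ≤ x)).card ≤ (I.filter (fun i' => i' ≤ x)).card) :=
    fun x hx => Nat.find_min hex hx
  set Cs : Finset ℤ := U.filter (fun e => qN e ≤ θs) with hCs
  set R : Finset ℕ := I.filter (fun i' => i' ≤ θs) with hR
  -- apply the kernel lemma
  have hker : ∀ e ∈ Cs, z e = 0 := by
    apply core_kernel a (τ+1) p ha hp hpB Cs R qN (nuf τ) z
    · -- rows < a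
      intro i hi
      rw [hR, mem_filter, hI, mem_filter, mem_range] at hi
      exact hi.1.1
    · -- nuf < N
      intro e _
      have h1 : (0:ℤ) ≤ e % ((τ:ℤ)+1) := Int.emod_nonneg _ (by omega)
      have h2 : e % ((τ:ℤ)+1) < (τ:ℤ)+1 := Int.emod_lt_of_pos _ (by omega)
      simp only [nuf]
      omega
    · -- nuf injective on Cs
      intro e he e' he' hnu
      have heC : e ∈ Cs := Finset.mem_coe.mp he
      have heC' : e' ∈ Cs := Finset.mem_coe.mp he'
      rw [hCs, mem_filter, hU, mem_filter] at heC heC'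
      have heE : e ∈ E := heC.1.1
      have heE' : e' ∈ E := heC'.1.1
      have hb := hEw e heE
      have hb' := hEw e' heE'
      simp only [nuf] at hnu
      have h1 : (0:ℤ) ≤ e % ((τ:ℤ)+1) := Int.emod_nonneg _ (by omega)
      have h1' : (0:ℤ) ≤ e' % ((τ:ℤ)+1) := Int.emod_nonneg _ (by omega)
      have h2 : e % ((τ:ℤ)+1) = e' % ((τ:ℤ)+1) := by omega
      have h3 : (e - e') % ((τ:ℤ)+1) = 0 := by
        rw [Int.sub_emod, h2, sub_self, Int.zero_emod]
      obtain ⟨kk, hk⟩ := Int.dvd_of_emod_eq_zero h3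
      have hkk : kk = 0 := by
        by_contra hkk0
        rcases lt_or_gt_of_ne hkk0 with h | h
        · have h10 : kk ≤ -1 := by omega
          have h11 : ((τ:ℤ)+1) * kk ≤ ((τ:ℤ)+1) * (-1) :=
            mul_le_mul_of_nonneg_left h10 (by omega)
          omega
        · have h10 : (1:ℤ) ≤ kk := by omega
          have h11 : ((τ:ℤ)+1) * 1 ≤ ((τ:ℤ)+1) * kk :=
            mul_le_mul_of_nonneg_left h10 (by omega)
          omega
      rw [hkk, mul_zero] at hk
      omega
    · -- card condition
      rw [hCs, hR] at *
      exact hPθ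
    · -- strict count condition
      intro x hx hwit
      obtain ⟨e₀, he₀, hxe₀⟩ := hwit
      have hxθ : x ≤ θs := by
        rw [hCs, mem_filter] at he₀
        omega
      have hnotP := hPmin (x-1) (by omega)
      push_neg at hnotP
      have hsplitC : (Cs.filter (fun e => x ≤ qN e)).card
          + (U.filter (fun e => qN e ≤ x-1)).card = Cs.card := by
        have h1 : Cs.filter (fun e => ¬ x ≤ qN e) = U.filter (fun e => qN e ≤ x - 1) := by
          rw [hCs, filter_filter]
          ext e
          simp only [mem_filter]
          constructor
          · rintro ⟨h1, h2, h3⟩; exact ⟨h1, by omega⟩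
          · rintro ⟨h1, h2⟩; exact ⟨h1, by omega, by omega⟩
        rw [← h1]
        exact card_filter_add_card_filter_not (p := fun e => x ≤ qN e)
      have hsplitR : (R.filter (fun i' => x ≤ i')).card
          + (I.filter (fun i' => i' ≤ x-1)).card = R.card := by
        have h1 : R.filter (fun i' => ¬ x ≤ i') = I.filter (fun i' => i' ≤ x - 1) := by
          rw [hR, filter_filter]
          ext i'
          simp only [mem_filter]
          constructor
          · rintro ⟨h1, h2, h3⟩; exact ⟨h1, by omega⟩
          · rintro ⟨h1, h2⟩; exact ⟨h1, by omega, by omega⟩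
        rw [← h1]
        exact card_filter_add_card_filter_not (p := fun i' => x ≤ i')
      omega
    · -- rows
      intro i hi
      rw [hR, mem_filter] at hi
      have h1 : Cs.filter (fun e => qN e ≤ i) = U.filter (fun e => qN e ≤ i) := by
        rw [hCs, filter_filter]
        ext e
        simp only [mem_filter]
        constructor
        · rintro ⟨h1, h2, h3⟩; exact ⟨h1, h3⟩
        · rintro ⟨h1, h2⟩; exact ⟨h1, by omega, h2⟩
      rw [h1]
      exact hrowlem i hi.1
  -- conclude
  have hjEtn : jE t = j := by
    have := hjEt.1; exact_mod_cast this
  have hqNt : qN t = 0 := by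
    show (qE t).toNat = 0
    rw [hjEt.2]
    rfl
  have htCs : t ∈ Cs := by
    rw [hCs, mem_filter, hU, mem_filter]
    exact ⟨⟨htE, by omega, by omega⟩, by omega⟩
  have hzt := hker t htCs
  have hidx : (⟨jE t - 1, by have := hjEnat t; omega⟩ : Fin r) = jf := by
    apply Fin.ext
    simp only
    omega
  have hdz : d t jf = 0 := by
    rw [← hidx]
    exact hzt
  exact sub_eq_zero.mp hdz

end

/-- For `τ + 1 > a(r+1)`, every `(a, a(r+1)-1, r)` LRSC is also an `(a, τ, r)`
LRSC; consequently there exists an `(a, τ, r)` LRSC of rate `r/(r+1)`, which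
equals `min{(τ+1-a)/(τ+1), r/(r+1)}` and is therefore rate-optimal. -/
theorem LRSC_large_tau (a τ r : ℕ) (ha : 1 < a) (haτ : a ≤ τ) (hr : 1 ≤ r)
    (hrτ : r < τ) (hpar : a * (r + 1) < τ + 1) :
    (∀ (F : Type) [Field F] [Fintype F] (k n : ℕ) (C : PacketCode F k n),
        IsLRSC C a (a * (r + 1) - 1) r → IsLRSC C a τ r) ∧
    (∃ (F : Type) (_ : Field F) (_ : Fintype F) (k n : ℕ) (C : PacketCode F k n),
        1 ≤ k ∧ k < n ∧ IsLRSC C a τ r ∧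
        (k : ℚ) / n = (r : ℚ) / ((r : ℚ) + 1) ∧
        (r : ℚ) / ((r : ℚ) + 1) =
          min (((τ : ℚ) + 1 - a) / ((τ : ℚ) + 1)) ((r : ℚ) / ((r : ℚ) + 1))) := by
  constructor
  · -- every (a, a(r+1)-1, r) LRSC is an (a, τ, r) LRSC
    intro F _ _ k n C hC
    exact ⟨IsSC_mono C a (a * (r + 1) - 1) τ (by omega) hC.1, hC.2⟩
  · -- existence of a rate-optimal (a, τ, r) LRSC
    have ha2 : 2 ≤ a := ha
    have hτ' : a * (r + 1) ≤ τ := by omega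
    obtain ⟨p, hple, hp⟩ := Nat.exists_infinite_primes (a.factorial * 2 ^ a ^ ((τ + 1) + 1) + 1)
    haveI : Fact p.Prime := ⟨hp⟩
    haveI : NeZero p := ⟨hp.pos.ne'⟩
    refine ⟨ZMod p, inferInstance, inferInstance, r, r + 1, theCode a τ r p, hr, by omega,
      ⟨?_, ?_⟩, ?_, ?_⟩
    · exact global_SC a τ r p ha2 hr hτ' hp (by omega)
    · exact local_SC a τ r p hr (by omega)
    · push_cast
      ring
    · have hr1 : (0:ℚ) < (r:ℚ) + 1 := by positivity
      have ht1 : (0:ℚ) < (τ:ℚ) + 1 := by positivity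
      have hle : (r : ℚ) / ((r : ℚ) + 1) ≤ ((τ : ℚ) + 1 - a) / ((τ : ℚ) + 1) := by
        rw [div_le_div_iff₀ hr1 ht1]
        have hcast : (a:ℚ) * ((r:ℚ) + 1) + 1 ≤ (τ:ℚ) + 1 := by
          have : (a * (r + 1) : ℕ) + 1 ≤ τ + 1 := hpar
          exact_mod_cast this
        nlinarith
      rw [min_eq_right hle]
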